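/- arXiv:1001.0248 — 2 statements merged into one kernel-verified Lean document; each statement's English description precedes it below -/
import Mathlib

section
/- Catalan's constant K = ∑_{n=0}^∞ (-1)^n/(2n+1)² equals ∫_0^{π/2} log(2 cos(t/2)) dt. -/
open Real MeasureTheory Filter Set Topology intervalIntegral

namespace CatalanAux

lemma one_add_exp (t : ℝ) :
    1 + Complex.exp (t * Complex.I) =
      Complex.exp ((t / 2 : ℝ) * Complex.I) * (2 * Real.cos (t / 2) : ℝ) := by
  have h2 : ((2 * Real.cos (t / 2) : ℝ) : ℂ)
      = Complex.exp (((t / 2 : ℝ) : ℂ) * Complex.I)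
        + Complex.exp (-(((t / 2 : ℝ) : ℂ) * Complex.I)) := by
    push_cast
    rw [Complex.two_cos]
    ring_nf
  rw [h2, mul_add, ← Complex.exp_add, ← Complex.exp_add]
  have e1 : (((t / 2 : ℝ) : ℂ)) * Complex.I + ((t / 2 : ℝ) : ℂ) * Complex.I
      = (t : ℂ) * Complex.I := by push_cast; ring
  have e2 : (((t / 2 : ℝ) : ℂ)) * Complex.I + -(((t / 2 : ℝ) : ℂ) * Complex.I) = 0 := by ring
  rw [e1, e2, Complex.exp_zero, add_comm]

lemma abs_one_add_exp (t : ℝ) (h : 0 ≤ Real.cos (t / 2)) :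
    ‖1 + Complex.exp (t * Complex.I)‖ = 2 * Real.cos (t / 2) := by
  rw [one_add_exp, norm_mul, Complex.norm_exp_ofReal_mul_I, one_mul, Complex.norm_real, Real.norm_eq_abs,
    abs_of_nonneg (by positivity)]

lemma abs_z (r t : ℝ) (hr : 0 ≤ r) :
    ‖(r : ℂ) * Complex.exp (t * Complex.I)‖ = r := by
  rw [norm_mul, Complex.norm_exp_ofReal_mul_I, Complex.norm_real, Real.norm_eq_abs, abs_of_nonneg hr, mul_one]

lemma one_le_abs (r t : ℝ) (hr : 0 ≤ r) (ht : 0 ≤ Real.cos t) :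
    1 ≤ ‖1 + (r : ℂ) * Complex.exp (t * Complex.I)‖ := by
  rw [Complex.norm_def]
  apply Real.one_le_sqrt.mpr
  rw [Complex.exp_mul_I, ← Complex.ofReal_cos, ← Complex.ofReal_sin]
  have h := Real.sin_sq_add_cos_sq t
  simp only [Complex.normSq_apply, Complex.add_re, Complex.add_im, Complex.one_re,
    Complex.one_im, Complex.mul_re, Complex.mul_im, Complex.ofReal_re, Complex.ofReal_im,
    Complex.I_re, Complex.I_im, mul_one, mul_zero]
  ring_nf
  nlinarith [sq_nonneg (r * Real.sin t), mul_nonneg (mul_nonneg hr ht) hr, sq_nonneg r]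

lemma abs_le_two (r t : ℝ) (hr0 : 0 ≤ r) (hr1 : r ≤ 1) :
    ‖1 + (r : ℂ) * Complex.exp (t * Complex.I)‖ ≤ 2 := by
  calc ‖1 + (r : ℂ) * Complex.exp (t * Complex.I)‖
      ≤ ‖(1:ℂ)‖ + ‖(r : ℂ) * Complex.exp (t * Complex.I)‖ :=
        norm_add_le _ _
    _ = 1 + r := by rw [norm_one, abs_z r t hr0]
    _ ≤ 2 := by linarith

lemma term_re (r t : ℝ) (n : ℕ) :
    ((-1 : ℂ) ^ (n + 1) * ((r : ℂ) * Complex.exp (t * Complex.I)) ^ n / n).re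
      = ((-1 : ℝ) ^ (n + 1) * r ^ n / n) * Real.cos (n * t) := by
  have e : (-1 : ℂ) ^ (n + 1) * ((r : ℂ) * Complex.exp (t * Complex.I)) ^ n / n
      = (((-1 : ℝ) ^ (n + 1) * r ^ n / n : ℝ) : ℂ) * Complex.exp ((n * t : ℝ) * Complex.I) := by
    rw [mul_pow, ← Complex.exp_nat_mul]
    rw [show (n : ℂ) * ((t : ℂ) * Complex.I) = ((n * t : ℝ) : ℂ) * Complex.I by push_cast; ring]
    push_cast
    ring
  rw [e, Complex.re_ofReal_mul, Complex.exp_ofReal_mul_I_re]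

lemma hasSum_log_abs (r : ℝ) (hr0 : 0 ≤ r) (hr1 : r < 1) (t : ℝ) :
    HasSum (fun n : ℕ => ((-1 : ℝ) ^ (n + 1) * r ^ n / n) * Real.cos (n * t))
      (Real.log (‖1 + (r : ℂ) * Complex.exp (t * Complex.I)‖)) := by
  have hz : ‖(r : ℂ) * Complex.exp (t * Complex.I)‖ < 1 := by
    rw [abs_z r t hr0]; exact hr1
  have h := (Complex.hasSum_taylorSeries_log hz).mapL Complex.reCLM
  simp only [Complex.reCLM_apply, Complex.log_re] at h
  have heq : (fun n : ℕ => ((-1 : ℝ) ^ (n + 1) * r ^ n / n) * Real.cos (n * t))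
      = fun n : ℕ => ((-1 : ℂ) ^ (n + 1) * ((r : ℂ) * Complex.exp (t * Complex.I)) ^ n / n).re :=
    funext fun n => (term_re r t n).symm
  rw [heq]
  convert h using 2

lemma cos_nat_pi (k : ℕ) : Real.cos (k * π) = (-1 : ℝ) ^ k := by
  simpa using Real.cos_nat_mul_pi_sub 0 k

lemma sin_odd (k : ℕ) : Real.sin ((2 * k + 1 : ℕ) * (π / 2)) = (-1 : ℝ) ^ k := by
  have h : ((2 * k + 1 : ℕ) : ℝ) * (π / 2) = k * π + π / 2 := by push_cast; ring
  rw [h, Real.sin_add, Real.sin_pi_div_two, Real.cos_pi_div_two, cos_nat_pi]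
  ring

lemma hasSum_integral (r : ℝ) (hr0 : 0 ≤ r) (hr1 : r < 1) :
    HasSum (fun k : ℕ => (-1 : ℝ) ^ k * r ^ (2 * k + 1) / (2 * (k : ℝ) + 1) ^ 2)
      (∫ t in (0 : ℝ)..(π / 2),
        Real.log (‖1 + (r : ℂ) * Complex.exp (t * Complex.I)‖)) := by
  set μ := volume.restrict (Ioc (0 : ℝ) (π / 2)) with hμ
  set F : ℕ → ℝ → ℝ := fun n t => ((-1 : ℝ) ^ (n + 1) * r ^ n / n) * Real.cos (n * t) with hF
  have hcont : ∀ n, Continuous (F n) := fun n =>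
    continuous_const.mul (Real.continuous_cos.comp (continuous_const.mul continuous_id))
  have hInt : ∀ n, Integrable (F n) μ := fun n =>
    ((hcont n).integrableOn_Ioc).integrable
  have hFle : ∀ n t, ‖F n t‖ ≤ r ^ n := by
    intro n t
    rcases Nat.eq_zero_or_pos n with rfl | hn
    · simp [hF]
    · have hn1 : (1 : ℝ) ≤ n := by exact_mod_cast hn
      have hrn : (0 : ℝ) ≤ r ^ n := pow_nonneg hr0 n
      have hc : |Real.cos (n * t)| ≤ 1 := Real.abs_cos_le_one _
      rw [Real.norm_eq_abs, hF]
      simp only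
      rw [abs_mul, abs_div, abs_mul, abs_pow, abs_pow, abs_neg, abs_one, one_pow, one_mul,
        abs_of_nonneg hr0, Nat.abs_cast]
      calc r ^ n / (n : ℝ) * |Real.cos (n * t)| ≤ r ^ n / (n : ℝ) * 1 :=
            mul_le_mul_of_nonneg_left hc (by positivity)
        _ = r ^ n / (n : ℝ) := mul_one _
        _ ≤ r ^ n := div_le_self hrn hn1
  have hnorm : Summable fun n => ∫ t, ‖F n t‖ ∂μ := by
    apply Summable.of_nonneg_of_le
      (fun n => integral_nonneg fun t => norm_nonneg _)
      (fun n => ?_)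
      ((summable_geometric_of_lt_one hr0 hr1).mul_left (π / 2))
    calc ∫ t, ‖F n t‖ ∂μ ≤ ∫ _t, r ^ n ∂μ := by
          apply integral_mono ((hInt n).norm) (integrable_const _)
          intro t; exact hFle n t
      _ = π / 2 * r ^ n := by
          rw [MeasureTheory.integral_const, hμ, measureReal_def, Measure.restrict_apply_univ, Real.volume_Ioc,
            ENNReal.toReal_ofReal (by rw [sub_zero]; positivity), smul_eq_mul, sub_zero]
  have hs := MeasureTheory.hasSum_integral_of_summable_integral_norm hInt hnorm
  have hval : (∫ t, (∑' n, F n t) ∂μ)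
      = ∫ t in (0 : ℝ)..(π / 2),
          Real.log (‖1 + (r : ℂ) * Complex.exp (t * Complex.I)‖) := by
    rw [intervalIntegral.integral_of_le (by positivity : (0:ℝ) ≤ π / 2)]
    apply MeasureTheory.integral_congr_ae
    filter_upwards with t
    exact (hasSum_log_abs r hr0 hr1 t).tsum_eq
  rw [hval] at hs
  have hterm : ∀ n : ℕ, (∫ t, F n t ∂μ)
      = (-1 : ℝ) ^ (n + 1) * r ^ n * Real.sin (n * (π / 2)) / (n : ℝ) ^ 2 := by
    intro n
    rcases Nat.eq_zero_or_pos n with rfl | hn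
    · simp [hF]
    · have hn0 : (n : ℝ) ≠ 0 := by exact_mod_cast hn.ne'
      rw [hμ, ← intervalIntegral.integral_of_le (by positivity : (0:ℝ) ≤ π / 2), hF]
      simp only
      rw [intervalIntegral.integral_const_mul]
      have h2 := intervalIntegral.integral_comp_mul_left (a := (0:ℝ)) (b := π/2)
        (fun x => Real.cos x) hn0
      try simp only at h2
      rw [h2, mul_zero, integral_cos, Real.sin_zero, sub_zero, smul_eq_mul, pow_two]
      field_simp
  have hs2 : HasSum
      (fun n : ℕ => (-1 : ℝ) ^ (n + 1) * r ^ n * Real.sin (n * (π / 2)) / (n : ℝ) ^ 2)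
      (∫ t in (0 : ℝ)..(π / 2),
        Real.log (‖1 + (r : ℂ) * Complex.exp (t * Complex.I)‖)) := by
    rw [show (fun n : ℕ => (-1 : ℝ) ^ (n + 1) * r ^ n * Real.sin (n * (π / 2)) / (n : ℝ) ^ 2)
      = fun n => ∫ t, F n t ∂μ from funext fun n => (hterm n).symm]
    exact hs
  have hinj : Function.Injective (fun k : ℕ => 2 * k + 1) := by
    intro a b h
    simp only at h
    omega
  have hzero : ∀ n ∉ Set.range (fun k : ℕ => 2 * k + 1),
      (-1 : ℝ) ^ (n + 1) * r ^ n * Real.sin (n * (π / 2)) / (n : ℝ) ^ 2 = 0 := by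
    intro n hn
    have hev : Even n := by
      rcases Nat.even_or_odd n with h | h
      · exact h
      · rcases h with ⟨m, hm⟩
        exact absurd ⟨m, by simp only; omega⟩ hn
    obtain ⟨m, hm⟩ := hev
    have h3 : ((n : ℝ)) * (π / 2) = m * π := by
      rw [hm]; push_cast; ring
    rw [h3, Real.sin_nat_mul_pi, mul_zero, zero_div]
  have hodd := (hinj.hasSum_iff hzero).mpr hs2
  have heq : (fun k : ℕ => (-1 : ℝ) ^ k * r ^ (2 * k + 1) / (2 * (k : ℝ) + 1) ^ 2)
      = (fun n : ℕ => (-1 : ℝ) ^ (n + 1) * r ^ n * Real.sin (n * (π / 2)) / (n : ℝ) ^ 2)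
        ∘ (fun k : ℕ => 2 * k + 1) := by
    funext k
    simp only [Function.comp]
    rw [sin_odd k]
    have h1 : (-1 : ℝ) ^ (2 * k + 1 + 1) = 1 := by
      rw [show 2 * k + 1 + 1 = 2 * (k + 1) by ring, pow_mul]
      norm_num
    rw [h1]
    push_cast
    ring
  rw [heq]
  exact hodd



lemma mem_Ioo_eventually : Ioo (0:ℝ) 1 ∈ 𝓝[<] (1 : ℝ) :=
  Ioo_mem_nhdsLT_of_mem (Set.mem_Ioc.mpr ⟨zero_lt_one, le_refl 1⟩)

lemma tendsto_sum_side :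
    Tendsto (fun r : ℝ => ∑' k : ℕ, (-1:ℝ)^k * r^(2*k+1) / (2*(k:ℝ)+1)^2) (𝓝[<] (1:ℝ))
      (𝓝 (∑' k : ℕ, (-1:ℝ)^k / (2*(k:ℝ)+1)^2)) := by
  apply tendsto_tsum_of_dominated_convergence (bound := fun k : ℕ => 1/(2*(k:ℝ)+1)^2)
  · have h1 : Summable (fun k : ℕ => 1/((k:ℝ)+1)^2) := by
      have h2 := Real.summable_one_div_nat_pow.mpr (by norm_num : 1 < 2)
      have h3 := (summable_nat_add_iff 1).mpr h2
      apply h3.congr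
      intro k
      push_cast
      ring
    apply h1.of_nonneg_of_le (fun k => by positivity)
    intro k
    apply one_div_le_one_div_of_le (by positivity)
    have : (0:ℝ) ≤ k := Nat.cast_nonneg k
    nlinarith
  · intro k
    have hc : Tendsto (fun r : ℝ => (-1:ℝ)^k * r^(2*k+1) / (2*(k:ℝ)+1)^2) (𝓝 1)
        (𝓝 ((-1:ℝ)^k * (1:ℝ)^(2*k+1) / (2*(k:ℝ)+1)^2)) :=
      ((continuous_const.mul (continuous_pow _)).div_const _).tendsto 1
    rw [one_pow, mul_one] at hc
    exact hc.mono_left nhdsWithin_le_nhds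
  · filter_upwards [mem_Ioo_eventually] with r hr k
    rw [Real.norm_eq_abs, abs_div, abs_mul, abs_pow, abs_pow, abs_neg, abs_one, one_pow,
      one_mul, abs_of_nonneg hr.1.le, abs_of_nonneg (by positivity : (0:ℝ) ≤ (2*(k:ℝ)+1)^2)]
    have h4 : r ^ (2*k+1) ≤ 1 := pow_le_one₀ hr.1.le hr.2.le
    rw [div_le_div_iff₀ (by positivity) (by positivity)]
    nlinarith [sq_nonneg (2*(k:ℝ)+1)]



lemma tendsto_integral_side :
    Tendsto (fun r : ℝ => ∫ t in (0:ℝ)..(π/2),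
        Real.log (‖1 + (r:ℂ) * Complex.exp (t * Complex.I)‖)) (𝓝[<] (1:ℝ))
      (𝓝 (∫ t in (0:ℝ)..(π/2), Real.log (2 * Real.cos (t/2)))) := by
  have hpi : (0:ℝ) ≤ π / 2 := by positivity
  apply intervalIntegral.tendsto_integral_filter_of_dominated_convergence
    (bound := fun _ => Real.log 2)
  · filter_upwards with r
    have hm : Measurable fun t : ℝ => ‖1 + (r:ℂ) * Complex.exp (t * Complex.I)‖ :=
      (continuous_norm.comp (continuous_const.add (continuous_const.mul
        (Complex.continuous_exp.comp (Complex.continuous_ofReal.mul continuous_const))))).measurable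
    exact (Real.measurable_log.comp hm).aestronglyMeasurable
  · filter_upwards [mem_Ioo_eventually] with r hr
    apply ae_of_all
    intro t ht
    have ht' : t ∈ Ioc (0:ℝ) (π/2) := by rwa [uIoc_of_le hpi] at ht
    have hcos : 0 ≤ Real.cos t := by
      apply Real.cos_nonneg_of_mem_Icc
      constructor <;> [linarith [ht'.1, pi_pos]; exact ht'.2]
    have h1 := one_le_abs r t hr.1.le hcos
    have h2 := abs_le_two r t hr.1.le hr.2.le
    rw [Real.norm_eq_abs, abs_of_nonneg (Real.log_nonneg h1)]
    exact Real.log_le_log (by linarith) h2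
  · exact intervalIntegrable_const
  · apply ae_of_all
    intro t ht
    have ht' : t ∈ Ioc (0:ℝ) (π/2) := by rwa [uIoc_of_le hpi] at ht
    have hcos2 : 0 < Real.cos (t/2) := by
      apply Real.cos_pos_of_mem_Ioo
      constructor
      · linarith [ht'.1, pi_pos]
      · linarith [ht'.2, pi_pos]
    have hval : ‖1 + ((1:ℝ):ℂ) * Complex.exp (t * Complex.I)‖
        = 2 * Real.cos (t/2) := by
      rw [Complex.ofReal_one, one_mul, abs_one_add_exp t hcos2.le]
    have hc : Tendsto (fun r : ℝ => ‖1 + (r:ℂ) * Complex.exp (t * Complex.I)‖)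
        (𝓝 1) (𝓝 (2 * Real.cos (t/2))) := by
      rw [← hval]
      exact ((continuous_norm.comp (continuous_const.add
        ((Complex.continuous_ofReal).mul continuous_const))).tendsto 1)
    have hlog : Tendsto Real.log (𝓝 (2 * Real.cos (t/2))) (𝓝 (Real.log (2 * Real.cos (t/2)))) :=
      (Real.continuousAt_log (by positivity)).tendsto
    exact (hlog.comp hc).mono_left nhdsWithin_le_nhds



end CatalanAux

open Real CatalanAux Filter Set Topology

/-- Catalan's constant K = ∑_{n=0}^∞ (-1)^n/(2n+1)² equals ∫_0^{π/2} log(2 cos(t/2)) dt. -/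
theorem catalan_eq_integral_log_two_cos :
    ∑' n : ℕ, (-1 : ℝ) ^ n / (2 * n + 1) ^ 2 =
      ∫ t in (0 : ℝ)..(Real.pi / 2), Real.log (2 * Real.cos (t / 2)) := by
  have h1 := tendsto_sum_side
  have h2 := tendsto_integral_side
  have heq : ∀ᶠ r in 𝓝[<] (1:ℝ),
      (fun r : ℝ => ∑' k : ℕ, (-1:ℝ)^k * r^(2*k+1) / (2*(k:ℝ)+1)^2) r
        = (fun r : ℝ => ∫ t in (0:ℝ)..(π/2),
            Real.log (‖1 + (r:ℂ) * Complex.exp (t * Complex.I)‖)) r := by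
    filter_upwards [mem_Ioo_eventually] with r hr
    exact (hasSum_integral r hr.1.le hr.2).tsum_eq
  have := tendsto_nhds_unique (h1.congr' heq) h2
  rw [← this]
end

section
/- For every real θ with |θ| < π, tan(θ/2)/2 = (1/2) ∑_{n=1}^∞ c_n (θ/2)^{2n-1}, where c_n = B_{2n} (2^{2n} - 1) 2^{2n} (-1)^{n+1} / (2n)! and B_{2n} are the Bernoulli numbers. -/
open Real

open Finset in
lemma abs_bernoulli_le (k : ℕ) (hk : k ≠ 0) :
    |(bernoulli (2 * k) : ℝ)| ≤ 4 * (Nat.factorial (2 * k)) / (2 * π) ^ (2 * k) := by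
  have h := hasSum_zeta_nat hk
  set Z : ℝ := (-1 : ℝ) ^ (k + 1) * (2 : ℝ) ^ (2 * k - 1) * π ^ (2 * k) *
      bernoulli (2 * k) / ((2 * k).factorial : ℝ) with hZ
  have h0 : 0 ≤ Z := h.nonneg fun n => by positivity
  have h2 : Z ≤ 2 := by
    have hle : Z ≤ π ^ 2 / 6 := by
      refine hasSum_le (fun n => ?_) h hasSum_zeta_two
      rcases Nat.eq_zero_or_pos n with rfl | hn
      · simp [Nat.mul_ne_zero two_ne_zero hk, zero_pow, pow_eq_zero_iff]
      · have h1n : (1 : ℝ) ≤ (n : ℝ) := by exact_mod_cast hn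
        have : (n : ℝ) ^ 2 ≤ (n : ℝ) ^ (2 * k) := by
          apply pow_le_pow_right₀ h1n
          omega
        apply one_div_le_one_div_of_le (by positivity) this
    nlinarith [pi_lt_d2, pi_gt_three]
  -- |Z| = 2^(2k-1) π^(2k) |B| / (2k)!
  have hfac : (0 : ℝ) < ((2 * k).factorial : ℝ) := by positivity
  have habs : Z = 2 ^ (2 * k - 1) * π ^ (2 * k) * |(bernoulli (2 * k) : ℝ)| / ((2 * k).factorial : ℝ) := by
    have := abs_eq_self.mpr h0
    rw [← this, hZ]
    rw [abs_div, abs_mul, abs_mul, abs_mul, abs_pow, abs_neg, abs_one, one_pow, one_mul,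
      abs_pow, abs_pow, abs_two, abs_of_pos pi_pos, Nat.abs_cast]
  have hpow : (2 : ℝ) ^ (2 * k - 1) * π ^ (2 * k) = (2 * π) ^ (2 * k) / 2 := by
    rw [mul_pow, ← pow_sub_one_mul (by omega : 2 * k ≠ 0) (2:ℝ)]
    ring
  rw [habs, hpow] at h2
  have hp : (0 : ℝ) < (2 * π) ^ (2 * k) := by positivity
  rw [le_div_iff₀ hp]
  rw [div_le_iff₀ hfac] at h2
  nlinarith [abs_nonneg ((bernoulli (2*k) : ℝ))]

lemma summable_bern (z : ℂ) (hz : ‖z‖ < 2 * π) :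
    Summable (fun n : ℕ => ‖(bernoulli n : ℂ) * z ^ n / (Nat.factorial n)‖) := by
  have h0 : (0:ℝ) ≤ ‖z‖ := norm_nonneg z
  have hq : ‖z‖ / (2 * π) < 1 := (div_lt_one (by positivity)).mpr hz
  have hq0 : (0:ℝ) ≤ ‖z‖ / (2 * π) := by positivity
  refine Summable.of_nonneg_of_le (fun n => norm_nonneg _) (fun n => ?_)
    ((summable_geometric_of_lt_one hq0 hq).mul_left 4)
  have hfac : (0:ℝ) < (Nat.factorial n : ℝ) := by positivity
  rw [norm_div, norm_mul, norm_pow, Complex.norm_natCast]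
  have hb : ‖(bernoulli n : ℂ)‖ = |(bernoulli n : ℝ)| := by
    rw [show ((bernoulli n : ℂ)) = ((bernoulli n : ℝ) : ℂ) by push_cast; ring,
      Complex.norm_real, Real.norm_eq_abs]
  rw [hb]
  rcases Nat.even_or_odd n with ⟨k, hk⟩ | ⟨k, hk⟩
  · rcases Nat.eq_zero_or_pos k with rfl | hkpos
    · subst hk; norm_num [bernoulli_zero]
    · have h2k : n = 2 * k := by omega
      subst h2k
      have hber := abs_bernoulli_le k (by omega)
      have h1 : |(bernoulli (2*k) : ℝ)| * ‖z‖ ^ (2*k) / (Nat.factorial (2*k) : ℝ) ≤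
          (4 * ((2 * k).factorial : ℝ) / (2 * π) ^ (2 * k)) * ‖z‖ ^ (2*k) /
            (Nat.factorial (2*k) : ℝ) := by
        gcongr
      refine h1.trans (le_of_eq ?_)
      rw [div_pow]
      field_simp
  · rcases Nat.eq_zero_or_pos k with rfl | hkpos
    · have : n = 1 := by omega
      subst this
      simp only [bernoulli_one, pow_one, Nat.factorial_one, Nat.cast_one, div_one]
      rw [show |(((-1 : ℚ)/2 : ℚ) : ℝ)| = 1/2 by norm_num]
      have : 4 * (‖z‖ / (2 * π)) = (2/π) * ‖z‖ := by field_simp; ring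
      rw [this]
      have hpi : π ≤ 4 := pi_le_four
      have : (1:ℝ)/2 ≤ 2/π := by
        rw [div_le_div_iff₀ two_pos pi_pos]
        nlinarith
      nlinarith
    · have hodd : Odd n := ⟨k, by omega⟩
      have hzero : bernoulli n = 0 := by
        rw [bernoulli_eq_bernoulli'_of_ne_one (by omega)]
        exact bernoulli'_eq_zero_of_odd hodd (by omega)
      rw [hzero]
      simp only [Rat.cast_zero, abs_zero, zero_mul, zero_div]
      positivity

open Finset in
lemma bern_gen (z : ℂ) (hz : ‖z‖ < 2 * π) (hez : Complex.exp z ≠ 1) :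
    HasSum (fun n : ℕ => (bernoulli n : ℂ) * z ^ n / (Nat.factorial n))
      (z / (Complex.exp z - 1)) := by
  set a : ℕ → ℂ := fun n => (bernoulli n : ℂ) * z ^ n / (Nat.factorial n) with ha_def
  set b : ℕ → ℂ := fun n => if n = 0 then 0 else z ^ n / (Nat.factorial n) with hb_def
  have ha : Summable fun n => ‖a n‖ := summable_bern z hz
  have hexp : HasSum (fun n : ℕ => z ^ n / (Nat.factorial n)) (Complex.exp z) := by
    rw [Complex.exp_eq_exp_ℂ]
    exact NormedSpace.expSeries_div_hasSum_exp z
  have hbsum : HasSum b (Complex.exp z - 1) := by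
    have hone : HasSum (fun n : ℕ => if n = 0 then (1:ℂ) else 0) 1 := hasSum_ite_eq 0 1
    have := hexp.sub hone
    convert this using 1
    · rfl
    funext n
    by_cases hn : n = 0 <;> simp [hb_def, hn]
  have hb : Summable fun n => ‖b n‖ := by
    refine Summable.of_nonneg_of_le (fun n => norm_nonneg _) (fun n => ?_)
      (Real.summable_pow_div_factorial ‖z‖)
    by_cases hn : n = 0 <;>
      simp [hb_def, hn, norm_div, norm_pow, Complex.norm_natCast] <;> positivity
  have hcauchy := tsum_mul_tsum_eq_tsum_sum_antidiagonal_of_summable_norm ha hb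
  have hc : (fun k : ℕ => ∑ p ∈ antidiagonal k, a p.1 * b p.2) =
      fun k : ℕ => if k = 1 then z else 0 := by
    funext k
    rw [Finset.Nat.sum_antidiagonal_eq_sum_range_succ_mk]
    rw [Finset.sum_range_succ]
    have hlast : a k * b (k - k) = 0 := by simp [hb_def]
    rw [hlast, add_zero]
    have hterm : ∀ i ∈ Finset.range k, a i * b (k - i) =
        ((k.choose i : ℚ) * bernoulli i : ℚ) * z ^ k / (Nat.factorial k) := by
      intro i hi
      have hik : i < k := Finset.mem_range.mp hi
      have hsub : k - i ≠ 0 := by omega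
      simp only [ha_def, hb_def, if_neg hsub]
      have hchoose : (k.choose i : ℂ) = (Nat.factorial k : ℂ) /
          ((Nat.factorial i : ℂ) * (Nat.factorial (k - i) : ℂ)) :=
        Nat.cast_choose ℂ hik.le
      have hzpow : z ^ i * z ^ (k - i) = z ^ k := by
        rw [← pow_add]; congr 1; omega
      push_cast
      rw [hchoose]
      rw [← hzpow]
      have hkf : (k.factorial : ℂ) ≠ 0 := by exact_mod_cast k.factorial_ne_zero
      field_simp
    rw [Finset.sum_congr rfl hterm, ← Finset.sum_div, ← Finset.sum_mul]
    have := sum_bernoulli k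
    rw [show (∑ i ∈ Finset.range k, (((k.choose i : ℚ) * bernoulli i : ℚ) : ℂ)) =
        ((∑ i ∈ Finset.range k, (k.choose i : ℚ) * bernoulli i : ℚ) : ℂ) by push_cast; ring,
      this]
    by_cases hk : k = 1 <;> simp [hk, Nat.factorial_one]
  rw [hc] at hcauchy
  rw [hbsum.tsum_eq, tsum_ite_eq] at hcauchy
  have hS : HasSum a (∑' n, a n) := ha.of_norm.hasSum
  have hne : Complex.exp z - 1 ≠ 0 := sub_ne_zero.mpr hez
  have : (∑' n, a n) = z / (Complex.exp z - 1) := by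
    rw [eq_div_iff hne]; exact hcauchy
  exact this ▸ hS

set_option maxHeartbeats 1000000 in
lemma hasSum_mul_cot (x : ℝ) (h1 : x ≠ 0) (h2 : |x| < π) :
    HasSum (fun n : ℕ => (bernoulli (2 * n) : ℝ) * (-4) ^ n * x ^ (2 * n) /
        (Nat.factorial (2 * n)))
      (x * (Real.cos x / Real.sin x)) := by
  have habs := abs_lt.mp h2
  have hsin : Real.sin x ≠ 0 := by
    rw [Real.sin_ne_zero_iff]
    intro n hn
    rcases Int.lt_trichotomy n 0 with hneg | rfl | hpos
    · have hle : (n : ℝ) ≤ -1 := by exact_mod_cast (by omega : n ≤ (-1:ℤ))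
      nlinarith [pi_pos]
    · simp at hn; exact h1 hn.symm
    · have hle : (1:ℝ) ≤ (n : ℝ) := by exact_mod_cast (by omega : (1:ℤ) ≤ n)
      nlinarith [pi_pos]
  set z : ℂ := 2 * x * Complex.I with hzdef
  have hnz : ‖z‖ < 2 * π := by
    rw [hzdef]
    simp only [norm_mul, Complex.norm_I, mul_one, Complex.norm_ofNat, Complex.norm_real,
      Real.norm_eq_abs]
    nlinarith [abs_nonneg x, pi_pos]
  have hez : Complex.exp z ≠ 1 := by
    intro hcon
    rw [Complex.exp_eq_one_iff] at hcon
    obtain ⟨n, hn⟩ := hcon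
    rw [hzdef] at hn
    have hx : (x : ℂ) = n * π := by
      linear_combination (-Complex.I/2) * hn + ((x:ℂ) - n*π) * Complex.I_sq
    have hxr : x = n * π := by exact_mod_cast hx
    rcases Int.lt_trichotomy n 0 with hneg | rfl | hpos
    · have h1n : (n : ℝ) ≤ -1 := by exact_mod_cast (by omega : n ≤ (-1:ℤ))
      nlinarith [pi_pos]
    · simp at hxr; exact h1 hxr
    · have h1n : (1:ℝ) ≤ (n : ℝ) := by exact_mod_cast (by omega : (1:ℤ) ≤ n)
      nlinarith [pi_pos]
  have h := bern_gen z hnz hez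
  have hval : z / (Complex.exp z - 1) =
      ((x * (Real.cos x / Real.sin x) : ℝ) : ℂ) - x * Complex.I := by
    have hne : Complex.exp z - 1 ≠ 0 := sub_ne_zero.mpr hez
    rw [div_eq_iff hne, hzdef]
    have hexp : Complex.exp (2 * (x:ℂ) * Complex.I) =
        ((Real.cos (2 * x) : ℝ) : ℂ) + ((Real.sin (2 * x) : ℝ) : ℂ) * Complex.I := by
      rw [show (2 * (x:ℂ) * Complex.I) = ((2 * x : ℝ) : ℂ) * Complex.I by push_cast; ring,
        Complex.exp_mul_I, Complex.ofReal_cos, Complex.ofReal_sin]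
    rw [hexp, Real.cos_two_mul, Real.sin_two_mul]
    have hs : Complex.sin (x:ℂ) ≠ 0 := by
      rw [← Complex.ofReal_sin]
      exact Complex.ofReal_ne_zero.mpr hsin
    have hsc := Complex.sin_sq_add_cos_sq (x:ℂ)
    simp only [Complex.ofReal_mul, Complex.ofReal_sub, Complex.ofReal_ofNat,
      Complex.ofReal_pow, Complex.ofReal_one, Complex.ofReal_div, Complex.ofReal_cos,
      Complex.ofReal_sin]
    field_simp
    linear_combination (-2 * (x:ℂ) * Complex.cos (x:ℂ)) * hsc +
      (2 * (x:ℂ) * Complex.cos (x:ℂ) * Complex.sin (x:ℂ) ^ 2) * Complex.I_sq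
  rw [hval] at h
  -- odd part
  have hodd : HasSum (fun n : ℕ => (bernoulli (2 * n + 1) : ℂ) * z ^ (2 * n + 1) /
      (Nat.factorial (2 * n + 1))) (-(x * Complex.I)) := by
    have : (fun n : ℕ => (bernoulli (2 * n + 1) : ℂ) * z ^ (2 * n + 1) /
        (Nat.factorial (2 * n + 1))) = fun n => if n = 0 then -(x * Complex.I) else 0 := by
      funext n
      rcases Nat.eq_zero_or_pos n with rfl | hn
      · simp [bernoulli_one, hzdef]
        push_cast
        ring
      · have hzero : bernoulli (2 * n + 1) = 0 := by
          rw [bernoulli_eq_bernoulli'_of_ne_one (by omega)]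
          exact bernoulli'_eq_zero_of_odd ⟨n, by omega⟩ (by omega)
        simp [hzero, if_neg (by omega : ¬ n = 0)]
    rw [this]
    exact hasSum_ite_eq 0 _
  have hsummable : Summable (fun n : ℕ => (bernoulli n : ℂ) * z ^ n / (Nat.factorial n)) :=
    h.summable
  have hevensummable : Summable (fun n : ℕ => (bernoulli (2 * n) : ℂ) * z ^ (2 * n) /
      (Nat.factorial (2 * n))) := by
    exact hsummable.comp_injective fun a b hab => by omega
  have heven := hevensummable.hasSum
  have htotal := HasSum.even_add_odd (f := fun n : ℕ => (bernoulli n : ℂ) * z ^ n / (Nat.factorial n)) heven hodd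
  have hE : (∑' n : ℕ, (bernoulli (2 * n) : ℂ) * z ^ (2 * n) / (Nat.factorial (2 * n))) =
      ((x * (Real.cos x / Real.sin x) : ℝ) : ℂ) := by
    have := htotal.unique h
    linear_combination this
  rw [hE] at heven
  -- convert to real
  have hterm : (fun n : ℕ => (bernoulli (2 * n) : ℂ) * z ^ (2 * n) / (Nat.factorial (2 * n))) =
      fun n : ℕ => (((bernoulli (2 * n) : ℝ) * (-4) ^ n * x ^ (2 * n) /
        (Nat.factorial (2 * n)) : ℝ) : ℂ) := by
    funext n
    have hzpow : z ^ (2 * n) = ((((-4) ^ n * x ^ (2 * n) : ℝ)) : ℂ) := by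
      have hswap : ((2 * (x:ℂ)) ^ 2 * Complex.I ^ 2) ^ n = (2 * (x:ℂ) * Complex.I) ^ (2 * n) := by
        rw [mul_pow, ← pow_mul, ← pow_mul, ← mul_pow]
      rw [hzdef, ← hswap, Complex.I_sq]
      push_cast
      ring
    rw [hzpow]
    push_cast
    ring
  rw [hterm] at heven
  exact Complex.hasSum_ofReal.mp heven

/-- The Maclaurin coefficients of tan: c_n = B_{2n}(2^{2n}-1)2^{2n}(-1)^{n+1}/(2n)!. -/
noncomputable def tanCoeff (n : ℕ) : ℝ :=
  (bernoulli (2 * n) : ℝ) * (2 ^ (2 * n) - 1) * 2 ^ (2 * n) * (-1) ^ (n + 1) /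
    (Nat.factorial (2 * n))

lemma hasSum_tan' (t : ℝ) (h1 : t ≠ 0) (h2 : |t| < π / 2) :
    HasSum (fun n : ℕ => tanCoeff n * t ^ (2 * n - 1)) (Real.tan t) := by
  have habs := abs_lt.mp h2
  have hpi := pi_pos
  have hcos : Real.cos t ≠ 0 :=
    ne_of_gt (Real.cos_pos_of_mem_Ioo (Set.mem_Ioo.mpr ⟨habs.1, habs.2⟩))
  have hsin : Real.sin t ≠ 0 := by
    intro hcon
    rcases Real.sin_eq_zero_iff_of_lt_of_lt (by linarith) (by linarith) |>.mp hcon with rfl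
    · exact h1 rfl
  have h2t : |2 * t| < π := by rw [abs_mul, abs_two]; linarith [abs_lt.mpr habs]
  have hA := hasSum_mul_cot t h1 (by linarith [abs_lt.mpr habs])
  have hB := hasSum_mul_cot (2 * t) (by simpa using h1) h2t
  have hBB : HasSum (fun n : ℕ => (bernoulli (2 * n) : ℝ) * (-4) ^ n * 4 ^ n * t ^ (2 * n) /
      (Nat.factorial (2 * n))) (2 * t * (Real.cos (2*t) / Real.sin (2*t))) := by
    convert hB using 2 with n
    rw [mul_pow, show ((4:ℝ)) ^ n = 2 ^ (2 * n) by
      rw [show ((4:ℝ)) = 2 ^ 2 by norm_num, ← pow_mul]]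
    ring
  have hsub := hA.sub hBB
  have hval : t * (Real.cos t / Real.sin t) - 2 * t * (Real.cos (2*t) / Real.sin (2*t)) =
      t * Real.tan t := by
    rw [Real.tan_eq_sin_div_cos, Real.cos_two_mul, Real.sin_two_mul]
    have h1sc := Real.sin_sq_add_cos_sq t
    field_simp
    linear_combination (-1) * h1sc
  rw [hval] at hsub
  have key : HasSum (fun n : ℕ => (tanCoeff n * t ^ (2 * n - 1)) * t) (Real.tan t * t) := by
    rw [mul_comm (Real.tan t) t]
    convert hsub using 2 with n
    · rfl
    rcases Nat.eq_zero_or_pos n with rfl | hn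
    · simp [tanCoeff]
    · have ht : t ^ (2 * n - 1) * t = t ^ (2 * n) := by
        rw [← pow_succ]; congr 1; omega
      have h4 : ((-4 : ℝ)) ^ n = (-1) ^ n * 2 ^ (2 * n) := by
        rw [show ((-4:ℝ)) = -1 * 2 ^ 2 by norm_num, mul_pow, ← pow_mul]
      have h4' : ((4 : ℝ)) ^ n = 2 ^ (2 * n) := by
        rw [show ((4:ℝ)) = 2 ^ 2 by norm_num, ← pow_mul]
      rw [tanCoeff, mul_assoc, ht, h4, h4']
      ring
  exact (hasSum_mul_right_iff h1).mp key

/-- For |θ| < π, tan(θ/2)/2 = (1/2) ∑_{n=1}^∞ c_n (θ/2)^{2n-1}. -/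
theorem tan_half_series (θ : ℝ) (h : |θ| < Real.pi) :
    HasSum (fun n : ℕ => (1 / 2) * tanCoeff (n + 1) * (θ / 2) ^ (2 * (n + 1) - 1))
      (Real.tan (θ / 2) / 2) := by
  by_cases hθ : θ = 0
  · subst hθ
    have hz : ∀ n : ℕ, (1 / 2) * tanCoeff (n + 1) * ((0:ℝ) / 2) ^ (2 * (n + 1) - 1) = 0 := by
      intro n
      rw [zero_div, zero_pow (by omega), mul_zero]
    simp only [hz]
    simpa using hasSum_zero
  · set t : ℝ := θ / 2 with htdef
    have ht0 : t ≠ 0 := by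
      rw [htdef]; exact div_ne_zero hθ two_ne_zero
    have ht2 : |t| < π / 2 := by
      rw [htdef, abs_div, abs_two]
      linarith [h]
    have hg := hasSum_tan' t ht0 ht2
    have hshift : HasSum (fun n : ℕ => tanCoeff (n + 1) * t ^ (2 * (n + 1) - 1)) (Real.tan t) := by
      rw [hasSum_nat_add_iff (f := fun n : ℕ => tanCoeff n * t ^ (2 * n - 1)) 1]
      convert hg using 1
      · rfl
      simp [tanCoeff]
    have hfin := hshift.mul_left (1/2)
    rw [show Real.tan t / 2 = 1/2 * Real.tan t by ring]
    simpa [← mul_assoc] using hfin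
end
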